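/- Let L be any maximal layer on n channels. If there is a sorting network on n channels of depth d ≥ 1, then there is a sorting network on n channels of depth d whose first layer is L. -/

import Mathlib

namespace SN

open scoped Classical

/-- A comparator on `n` channels: a pair of channels. -/
abbrev Comp (n : ℕ) := Fin n × Fin n

/-- A layer is a finite set of comparators. -/
abbrev Layer (n : ℕ) := Finset (Comp n)

/-- A comparator network is a sequence (list) of layers; its depth is the length. -/
abbrev Net (n : ℕ) := List (Layer n)

/-- Each channel is used by at most one comparator of the layer. -/
def NoOverlap {n : ℕ} (L : Layer n) : Prop :=
  ∀ c ∈ L, ∀ c' ∈ L, c ≠ c' →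
    c.1 ≠ c'.1 ∧ c.1 ≠ c'.2 ∧ c.2 ≠ c'.1 ∧ c.2 ≠ c'.2

/-- A (standard) layer: comparators `(i,j)` with `i < j`, channels pairwise disjoint. -/
def IsLayer {n : ℕ} (L : Layer n) : Prop :=
  (∀ c ∈ L, c.1 < c.2) ∧ NoOverlap L

/-- A generalized layer: comparators `(i,j)` with `i ≠ j` allowed in any order. -/
def IsGenLayer {n : ℕ} (L : Layer n) : Prop :=
  (∀ c ∈ L, c.1 ≠ c.2) ∧ NoOverlap L

def IsNet {n : ℕ} (C : Net n) : Prop := ∀ L ∈ C, IsLayer L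

def IsGenNet {n : ℕ} (C : Net n) : Prop := ∀ L ∈ C, IsGenLayer L

/-- Apply one layer to a Boolean vector: a comparator `(i,j)` puts the min
(`&&`) on channel `i` and the max (`||`) on channel `j`. -/
noncomputable def applyLayer {n : ℕ} (L : Layer n) (x : Fin n → Bool) : Fin n → Bool :=
  fun k =>
    if h1 : ∃ c ∈ L, c.1 = k then x h1.choose.1 && x h1.choose.2
    else if h2 : ∃ c ∈ L, c.2 = k then x h2.choose.1 || x h2.choose.2
    else x k

/-- Run a comparator network on a Boolean input (layers applied in sequence). -/
noncomputable def run {n : ℕ} (C : Net n) (x : Fin n → Bool) : Fin n → Bool :=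
  C.foldl (fun y L => applyLayer L y) x

/-- Ascendingly sorted Boolean vector. -/
def BSorted {n : ℕ} (x : Fin n → Bool) : Prop :=
  ∀ i j : Fin n, i ≤ j → x i ≤ x j

/-- A sorting network: a comparator network sorting every Boolean input. -/
def IsSortingNet {n : ℕ} (C : Net n) : Prop :=
  IsNet C ∧ ∀ x : Fin n → Bool, BSorted (run C x)

/-- The set of outputs of a network on all Boolean inputs. -/
def outputs {n : ℕ} (C : Net n) : Set (Fin n → Bool) := Set.range (run C)

/-- Apply one layer to a vector of naturals. -/
noncomputable def applyLayerN {n : ℕ} (L : Layer n) (x : Fin n → ℕ) : Fin n → ℕ :=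
  fun k =>
    if h1 : ∃ c ∈ L, c.1 = k then min (x h1.choose.1) (x h1.choose.2)
    else if h2 : ∃ c ∈ L, c.2 = k then max (x h2.choose.1) (x h2.choose.2)
    else x k

noncomputable def runN {n : ℕ} (C : Net n) (x : Fin n → ℕ) : Fin n → ℕ :=
  C.foldl (fun y L => applyLayerN L y) x

def NSorted {n : ℕ} (x : Fin n → ℕ) : Prop :=
  ∀ i j : Fin n, i ≤ j → x i ≤ x j

/-- Permute the coordinates of a Boolean vector by `π` (channel `k`'s value
moves to channel `π k`). -/
def permVec {n : ℕ} (π : Equiv.Perm (Fin n)) (x : Fin n → Bool) : Fin n → Bool :=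
  fun i => x (π.symm i)

/-- The image of a set of Boolean vectors under coordinate permutation by `π`. -/
def permSet {n : ℕ} (π : Equiv.Perm (Fin n)) (X : Set (Fin n → Bool)) :
    Set (Fin n → Bool) :=
  permVec π '' X

/-- The image `π(L)` of a layer under a permutation of channels. -/
def permLayer {n : ℕ} (π : Equiv.Perm (Fin n)) (L : Layer n) : Layer n :=
  L.image fun c => (π c.1, π c.2)

/-- Channel `i` is used by some comparator of the layer `L`. -/
def usedIn {n : ℕ} (L : Layer n) (i : Fin n) : Prop := ∃ c ∈ L, c.1 = i ∨ c.2 = i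

/-- Channels `i` and `j` are joined by a comparator of `L`. -/
def Joined {n : ℕ} (L : Layer n) (i j : Fin n) : Prop := (i, j) ∈ L ∨ (j, i) ∈ L

/-- `i` is the smaller channel of some comparator of `L` (a min-channel). -/
def MinChan {n : ℕ} (L : Layer n) (i : Fin n) : Prop := ∃ c ∈ L, c.1 = i

/-- `i` is the larger channel of some comparator of `L` (a max-channel). -/
def MaxChan {n : ℕ} (L : Layer n) (i : Fin n) : Prop := ∃ c ∈ L, c.2 = i

/-- A two-layer network `[L1, L2]` is redundant if some comparator can be removed
so that the outputs of the result are a permutation of the original outputs. -/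
def Redundant {n : ℕ} (L1 L2 : Layer n) : Prop :=
  ∃ π : Equiv.Perm (Fin n),
    (∃ c ∈ L1, outputs [L1.erase c, L2] = permSet π (outputs [L1, L2])) ∨
    (∃ c ∈ L2, outputs [L1, L2.erase c] = permSet π (outputs [L1, L2]))

/-- A two-layer network `[L1, L2]` is saturated if it is non-redundant and no
comparator on two channels unused in the second layer can be added to the second
layer so as to make the output set a proper subset of a permutation of the
original output set. -/
def Saturated {n : ℕ} (L1 L2 : Layer n) : Prop :=
  ¬ Redundant L1 L2 ∧
  ¬ ∃ (c : Comp n) (π : Equiv.Perm (Fin n)),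
      c.1 < c.2 ∧ ¬ usedIn L2 c.1 ∧ ¬ usedIn L2 c.2 ∧
      outputs [L1, insert c L2] ⊂ permSet π (outputs [L1, L2])

/-- Vertices of the graph representation of `C`: the comparators of `C`,
tagged with the index of the layer containing them. -/
def Vertex {n : ℕ} (C : Net n) := {p : ℕ × Comp n // p.2 ∈ C.getD p.1 ∅}

/-- The channel carrying the min output (`b = false`, label 1) or max output
(`b = true`, label 2) of a comparator. -/
def outChan {n : ℕ} (c : Comp n) (b : Bool) : Fin n := if b then c.2 else c.1

/-- An edge with label `b` (1 for min, 2 for max) from comparator `u` to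
comparator `v`: the corresponding output of `u` is an input of `v`, i.e. `v`
is the next comparator on that channel. -/
def Edge {n : ℕ} (C : Net n) (b : Bool) (u v : ℕ × Comp n) : Prop :=
  u.1 < v.1 ∧ (outChan u.2 b = v.2.1 ∨ outChan u.2 b = v.2.2) ∧
  ∀ m, u.1 < m → m < v.1 → ¬ usedIn (C.getD m ∅) (outChan u.2 b)

/-- The graph representations of `C` and `D` are isomorphic: a bijection of
comparators preserving the labeled edges. -/
def GraphIso {n m : ℕ} (C : Net n) (D : Net m) : Prop :=
  ∃ f : Vertex C ≃ Vertex D,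
    ∀ (b : Bool) (u v : Vertex C),
      Edge C b u.val v.val ↔ Edge D b (f u).val (f v).val

/-- The graph representation of `C` is connected. -/
def GraphConnected {n : ℕ} (C : Net n) : Prop :=
  ∀ u v : Vertex C,
    Relation.ReflTransGen
      (fun a b : Vertex C => ∃ ℓ : Bool, Edge C ℓ a.val b.val ∨ Edge C ℓ b.val a.val) u v

/-- Reflection of a comparator: `(i,j) ↦ (n-j+1, n-i+1)` (in 1-based terms). -/
def reflectComp {n : ℕ} (c : Comp n) : Comp n := (c.2.rev, c.1.rev)

def reflectLayer {n : ℕ} (L : Layer n) : Layer n := L.image reflectComp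

/-- Reflection `C^R` of a comparator network. -/
def reflect {n : ℕ} (C : Net n) : Net n := C.map reflectLayer

/-- The first layer `F_n = {(2i-1, 2i) : 1 ≤ i ≤ ⌊n/2⌋}` (0-indexed: `(2i, 2i+1)`). -/
def FLayer (n : ℕ) : Layer n :=
  Finset.univ.filter fun c : Comp n => c.1.val % 2 = 0 ∧ c.2.val = c.1.val + 1

/-- The two-layer networks with first layer `F_n`, parametrized by second layer. -/
def SecondLayers (n : ℕ) := {L : Layer n // IsLayer L}

/-- The number `|R(G_n)|` of equivalence classes of two-layer networks with
first layer `F_n`, under graph isomorphism `≈`. -/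
noncomputable def numClasses (n : ℕ) : ℕ :=
  Nat.card (Quot fun L L' : SecondLayers n =>
    GraphIso ([FLayer n, L.val] : Net n) ([FLayer n, L'.val] : Net n))

/-- Redundant two-layer networks with first layer `F_n`. -/
def RedLayers (n : ℕ) := {L : Layer n // IsLayer L ∧ Redundant (FLayer n) L}

/-- The number of equivalence classes of redundant two-layer networks with
first layer `F_n`, under graph isomorphism `≈`. -/
noncomputable def numRedClasses (n : ℕ) : ℕ :=
  Nat.card (Quot fun L L' : RedLayers n =>
    GraphIso ([FLayer n, L.val] : Net n) ([FLayer n, L'.val] : Net n))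

/-! ### Auxiliary lemmas -/

section Aux

variable {n : ℕ}

lemma isGenLayer_of_isLayer {L : Layer n} (h : IsLayer L) : IsGenLayer L :=
  ⟨fun c hc => (h.1 c hc).ne, h.2⟩

lemma mem_eq_of_fst {L : Layer n} (hL : NoOverlap L) {a b : Fin n} (hab : (a, b) ∈ L)
    {c : Comp n} (hc : c ∈ L) (h : c.1 = a) : c = (a, b) := by
  by_contra hne
  exact (hL c hc (a, b) hab hne).1 h

lemma mem_eq_of_snd {L : Layer n} (hL : NoOverlap L) {a b : Fin n} (hab : (a, b) ∈ L)
    {c : Comp n} (hc : c ∈ L) (h : c.2 = b) : c = (a, b) := by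
  by_contra hne
  exact (hL c hc (a, b) hab hne).2.2.2 h

lemma not_fst_eq_snd {L : Layer n} (hL : IsGenLayer L) {a b : Fin n} (hab : (a, b) ∈ L)
    {c : Comp n} (hc : c ∈ L) : c.1 ≠ b := by
  intro h
  by_cases hce : c = (a, b)
  · exact hL.1 c hc (by rw [hce] at h ⊢; exact h ▸ rfl)
  · exact (hL.2 c hc (a, b) hab hce).2.1 h

lemma not_snd_eq_fst {L : Layer n} (hL : IsGenLayer L) {a b : Fin n} (hab : (a, b) ∈ L)
    {c : Comp n} (hc : c ∈ L) : c.2 ≠ a := by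
  intro h
  by_cases hce : c = (a, b)
  · exact hL.1 c hc (by rw [hce] at h ⊢; exact h ▸ rfl)
  · exact (hL.2 c hc (a, b) hab hce).2.2.1 h

lemma applyLayer_fst {L : Layer n} (hL : IsGenLayer L) {a b : Fin n} (hab : (a, b) ∈ L)
    (x : Fin n → Bool) : applyLayer L x a = (x a && x b) := by
  have h1 : ∃ c ∈ L, c.1 = a := ⟨(a, b), hab, rfl⟩
  have he : h1.choose = (a, b) :=
    mem_eq_of_fst hL.2 hab h1.choose_spec.1 h1.choose_spec.2
  rw [applyLayer, dif_pos h1, he]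

lemma applyLayer_snd {L : Layer n} (hL : IsGenLayer L) {a b : Fin n} (hab : (a, b) ∈ L)
    (x : Fin n → Bool) : applyLayer L x b = (x a || x b) := by
  have h1 : ¬ ∃ c ∈ L, c.1 = b := by
    rintro ⟨c, hc, h⟩; exact not_fst_eq_snd hL hab hc h
  have h2 : ∃ c ∈ L, c.2 = b := ⟨(a, b), hab, rfl⟩
  have he : h2.choose = (a, b) :=
    mem_eq_of_snd hL.2 hab h2.choose_spec.1 h2.choose_spec.2
  rw [applyLayer, dif_neg h1, dif_pos h2, he]

lemma applyLayer_unused {L : Layer n} {k : Fin n} (h : ¬ usedIn L k)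
    (x : Fin n → Bool) : applyLayer L x k = x k := by
  have h1 : ¬ ∃ c ∈ L, c.1 = k := by
    rintro ⟨c, hc, hh⟩; exact h ⟨c, hc, Or.inl hh⟩
  have h2 : ¬ ∃ c ∈ L, c.2 = k := by
    rintro ⟨c, hc, hh⟩; exact h ⟨c, hc, Or.inr hh⟩
  rw [applyLayer, dif_neg h1, dif_neg h2]

lemma run_nil (x : Fin n → Bool) : run ([] : Net n) x = x := rfl

lemma run_cons (M : Layer n) (C : Net n) (x : Fin n → Bool) :
    run (M :: C) x = run C (applyLayer M x) := rfl

lemma permVec_symm_permVec (π : Equiv.Perm (Fin n)) (y : Fin n → Bool) :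
    permVec π.symm (permVec π y) = y := by
  funext i; simp [permVec]

lemma permVec_permVec_symm (π : Equiv.Perm (Fin n)) (y : Fin n → Bool) :
    permVec π (permVec π.symm y) = y := by
  funext i; simp [permVec]

end Aux
section Aux2

variable {n : ℕ}

noncomputable def ones (u : Fin n → Bool) : ℕ :=
  (Finset.univ.filter fun i => u i = true).card

lemma ones_le (u : Fin n → Bool) : ones u ≤ n := by
  classical
  calc ones u ≤ (Finset.univ : Finset (Fin n)).card := Finset.card_filter_le _ _
  _ = n := by simp

lemma bsorted_mono {u : Fin n → Bool} (hu : BSorted u) {i j : Fin n}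
    (hij : i ≤ j) (hi : u i = true) : u j = true := by
  have := hu i j hij
  rw [hi] at this
  exact le_antisymm (by simp) this

lemma bsorted_char {u : Fin n → Bool} (hu : BSorted u) (i : Fin n) :
    u i = true ↔ n - ones u ≤ i.val := by
  classical
  constructor
  · intro h
    have hsub : Finset.Ici i ⊆ Finset.univ.filter fun j => u j = true := by
      intro j hj
      simp only [Finset.mem_Ici] at hj
      simp [bsorted_mono hu hj h]
    have := Finset.card_le_card hsub
    rw [Fin.card_Ici] at this
    have ho : ones u = (Finset.univ.filter fun j => u j = true).card := rfl
    omega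
  · intro h
    by_contra hfalse
    have hfi : u i = false := by simpa using hfalse
    have hsub : (Finset.univ.filter fun j => u j = true) ⊆ Finset.Ioi i := by
      intro j hj
      simp only [Finset.mem_filter] at hj
      simp only [Finset.mem_Ioi]
      by_contra hji
      have : u i = true := bsorted_mono hu (le_of_not_gt hji) hj.2
      rw [hfi] at this; exact Bool.noConfusion this
    have := Finset.card_le_card hsub
    rw [Fin.card_Ioi] at this
    have hin : i.val < n := i.isLt
    have hone : ones u ≤ n - 1 - i.val := this
    omega

lemma bsorted_eq_of_ones {u v : Fin n → Bool} (hu : BSorted u) (hv : BSorted v)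
    (h : ones u = ones v) : u = v := by
  funext i
  have h1 := bsorted_char hu i
  have h2 := bsorted_char hv i
  rw [h] at h1
  cases hui : u i <;> cases hvi : v i
  · rfl
  · rw [hui] at h1; rw [hvi] at h2
    simp only [Bool.false_eq_true, false_iff] at h1
    exact absurd (h2.mpr (by tauto)) (by tauto)
  · rw [hui] at h1; rw [hvi] at h2
    simp only [Bool.false_eq_true, false_iff] at h2
    exact absurd (h1.mp rfl) h2
  · rfl

lemma ones_permVec (π : Equiv.Perm (Fin n)) (u : Fin n → Bool) :
    ones (permVec π u) = ones u := by
  classical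
  unfold ones permVec
  apply Finset.card_bij (fun i _ => π.symm i)
  · intro a ha; simp only [Finset.mem_filter] at ha ⊢; exact ⟨Finset.mem_univ _, ha.2⟩
  · intro a _ b _ hab; exact π.symm.injective hab
  · intro b hb
    refine ⟨π b, ?_, by simp⟩
    simp only [Finset.mem_filter] at hb ⊢
    simpa using hb.2

lemma applyLayer_bsorted {L : Layer n} (hL : IsLayer L) {u : Fin n → Bool}
    (hu : BSorted u) : applyLayer L u = u := by
  have hgen := isGenLayer_of_isLayer hL
  funext k
  by_cases hk : usedIn L k
  · obtain ⟨c, hc, hrole⟩ := hk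
    have hcm : (c.1, c.2) ∈ L := by simpa using hc
    have hlt : c.1 < c.2 := hL.1 c hc
    rcases hrole with h | h
    · subst h
      rw [applyLayer_fst hgen hcm]
      have := hu c.1 c.2 hlt.le
      cases h1 : u c.1
      · simp
      · rw [h1] at this; rw [bsorted_mono hu hlt.le h1]; rfl
    · subst h
      rw [applyLayer_snd hgen hcm]
      cases h1 : u c.1
      · simp
      · rw [bsorted_mono hu hlt.le h1]; rfl
  · exact applyLayer_unused hk u

lemma run_bsorted {C : Net n} (hC : IsNet C) {u : Fin n → Bool}
    (hu : BSorted u) : run C u = u := by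
  induction C with
  | nil => rfl
  | cons M C ih =>
    rw [run_cons, applyLayer_bsorted (hC M (by simp)) hu]
    exact ih (fun L hL => hC L (by simp [hL]))

end Aux2
section Aux3

variable {n : ℕ}

noncomputable def chanF (L : Layer n) : Finset (Fin n) :=
  L.image Prod.fst ∪ L.image Prod.snd

lemma mem_chanF {L : Layer n} {k : Fin n} : k ∈ chanF L ↔ usedIn L k := by
  classical
  simp only [chanF, Finset.mem_union, Finset.mem_image, usedIn]
  constructor
  · rintro (⟨c, hc, h⟩ | ⟨c, hc, h⟩)
    · exact ⟨c, hc, Or.inl h⟩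
    · exact ⟨c, hc, Or.inr h⟩
  · rintro ⟨c, hc, h | h⟩
    · exact Or.inl ⟨c, hc, h⟩
    · exact Or.inr ⟨c, hc, h⟩

lemma card_chanF {L : Layer n} (hL : IsGenLayer L) : (chanF L).card = 2 * L.card := by
  classical
  have hd : Disjoint (L.image Prod.fst) (L.image Prod.snd) := by
    rw [Finset.disjoint_left]
    rintro a ha hb
    simp only [Finset.mem_image] at ha hb
    obtain ⟨c, hc, h1⟩ := ha
    obtain ⟨c', hc', h2⟩ := hb
    have : c.1 ≠ (c'.1, c'.2).2 := not_fst_eq_snd hL (by simpa using hc') hc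
    exact this (by rw [h1, h2])
  have h1 : (L.image Prod.fst).card = L.card := by
    apply Finset.card_image_of_injOn
    intro c hc c' hc' h
    by_contra hne
    exact (hL.2 c hc c' hc' hne).1 h
  have h2 : (L.image Prod.snd).card = L.card := by
    apply Finset.card_image_of_injOn
    intro c hc c' hc' h
    by_contra hne
    exact (hL.2 c hc c' hc' hne).2.2.2 h
  rw [chanF, Finset.card_union_of_disjoint hd, h1, h2]
  omega

lemma card_layer_le {L : Layer n} (hL : IsGenLayer L) : 2 * L.card ≤ n := by
  have := Finset.card_le_card (Finset.subset_univ (chanF L))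
  rw [card_chanF hL] at this
  simpa using this

lemma isLayer_insert {L : Layer n} (hL : IsLayer L) {i j : Fin n} (hij : i < j)
    (hi : ¬ usedIn L i) (hj : ¬ usedIn L j) : IsLayer (insert (i, j) L) := by
  classical
  have hchan : ∀ c ∈ L, c.1 ≠ i ∧ c.2 ≠ i ∧ c.1 ≠ j ∧ c.2 ≠ j := by
    intro c hc
    refine ⟨?_, ?_, ?_, ?_⟩ <;> intro h
    · exact hi ⟨c, hc, Or.inl h⟩
    · exact hi ⟨c, hc, Or.inr h⟩
    · exact hj ⟨c, hc, Or.inl h⟩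
    · exact hj ⟨c, hc, Or.inr h⟩
  constructor
  · intro c hc
    rcases Finset.mem_insert.mp hc with h | h
    · rw [h]; exact hij
    · exact hL.1 c h
  · intro c hc c' hc' hne
    rcases Finset.mem_insert.mp hc with h | h <;> rcases Finset.mem_insert.mp hc' with h' | h'
    · exact absurd (h.trans h'.symm) hne
    · obtain ⟨a1, a2, a3, a4⟩ := hchan c' h'
      rw [h]
      exact ⟨(Ne.symm a1), (Ne.symm a2), (Ne.symm a3), (Ne.symm a4)⟩
    · obtain ⟨a1, a2, a3, a4⟩ := hchan c h
      rw [h']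
      exact ⟨a1, a3, a2, a4⟩
    · exact hL.2 c h c' h' hne

lemma isGenLayer_single {i j : Fin n} (hij : i ≠ j) : IsGenLayer ({(i, j)} : Layer n) := by
  constructor
  · intro c hc; rw [Finset.mem_singleton] at hc; rw [hc]; exact hij
  · intro c hc c' hc' hne
    rw [Finset.mem_singleton] at hc hc'
    exact absurd (hc.trans hc'.symm) hne

lemma applyLayer_insert {L : Layer n} (hL : IsLayer L) {i j : Fin n} (hij : i < j)
    (hi : ¬ usedIn L i) (hj : ¬ usedIn L j) (x : Fin n → Bool) :
    applyLayer (insert (i, j) L) x = applyLayer L (applyLayer {(i, j)} x) := by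
  classical
  have hins := isGenLayer_of_isLayer (isLayer_insert hL hij hi hj)
  have hsing := isGenLayer_single hij.ne
  have hgen := isGenLayer_of_isLayer hL
  have hmem : (i, j) ∈ insert (i, j) L := Finset.mem_insert_self _ _
  have hIJ : ∀ c ∈ L, c.1 ≠ i ∧ c.2 ≠ i ∧ c.1 ≠ j ∧ c.2 ≠ j := by
    intro c hc
    refine ⟨?_, ?_, ?_, ?_⟩ <;> intro h
    · exact hi ⟨c, hc, Or.inl h⟩
    · exact hi ⟨c, hc, Or.inr h⟩
    · exact hj ⟨c, hc, Or.inl h⟩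
    · exact hj ⟨c, hc, Or.inr h⟩
  funext k
  have hyi : applyLayer {(i, j)} x i = (x i && x j) :=
    applyLayer_fst hsing (Finset.mem_singleton_self _) x
  have hyj : applyLayer {(i, j)} x j = (x i || x j) :=
    applyLayer_snd hsing (Finset.mem_singleton_self _) x
  by_cases hk : usedIn (insert (i, j) L) k
  · obtain ⟨c, hc, hrole⟩ := hk
    rcases Finset.mem_insert.mp hc with hcij | hcL
    · subst hcij
      rcases hrole with h | h
      · subst h
        rw [applyLayer_fst hins hmem, applyLayer_unused (L := L) hi, hyi]
      · subst h
        rw [applyLayer_snd hins hmem, applyLayer_unused (L := L) hj, hyj]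
    · have hcm : (c.1, c.2) ∈ L := by simpa using hcL
      have hcm' : (c.1, c.2) ∈ insert (i, j) L := Finset.mem_insert_of_mem hcm
      obtain ⟨a1, a2, a3, a4⟩ := hIJ c hcL
      have hy1 : applyLayer {(i, j)} x c.1 = x c.1 := by
        apply applyLayer_unused
        rintro ⟨c', hc', h⟩
        rw [Finset.mem_singleton] at hc'
        subst hc'
        rcases h with h | h
        · exact a1 h.symm
        · exact a3 h.symm
      have hy2 : applyLayer {(i, j)} x c.2 = x c.2 := by
        apply applyLayer_unused
        rintro ⟨c', hc', h⟩
        rw [Finset.mem_singleton] at hc'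
        subst hc'
        rcases h with h | h
        · exact a2 h.symm
        · exact a4 h.symm
      rcases hrole with h | h
      · subst h
        rw [applyLayer_fst hins hcm', applyLayer_fst hgen hcm, hy1, hy2]
      · subst h
        rw [applyLayer_snd hins hcm', applyLayer_snd hgen hcm, hy1, hy2]
  · have hkL : ¬ usedIn L k := by
      rintro ⟨c, hc, h⟩; exact hk ⟨c, Finset.mem_insert_of_mem hc, h⟩
    have hkS : ¬ usedIn ({(i, j)} : Layer n) k := by
      rintro ⟨c, hc, h⟩
      rw [Finset.mem_singleton] at hc
      subst hc
      exact hk ⟨(i, j), hmem, h⟩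
    rw [applyLayer_unused hk, applyLayer_unused hkL, applyLayer_unused hkS]

lemma extend_sorting {M : Layer n} {C' : Net n} (h : IsSortingNet (M :: C')) :
    ∃ M', IsLayer M' ∧ M'.card = n / 2 ∧ IsSortingNet (M' :: C') := by
  classical
  suffices H : ∀ k (M : Layer n), n / 2 - M.card ≤ k → IsSortingNet (M :: C') →
      ∃ M', IsLayer M' ∧ M'.card = n / 2 ∧ IsSortingNet (M' :: C') by
    exact H (n / 2) M (Nat.sub_le _ _) h
  intro k
  induction k with
  | zero =>
    intro M hk hs
    have hMl : IsLayer M := hs.1 M (by simp)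
    have hle := card_layer_le (isGenLayer_of_isLayer hMl)
    refine ⟨M, hMl, ?_, hs⟩
    omega
  | succ k ih =>
    intro M hk hs
    have hMl : IsLayer M := hs.1 M (by simp)
    have hgen := isGenLayer_of_isLayer hMl
    have hle := card_layer_le hgen
    by_cases hcard : M.card = n / 2
    · exact ⟨M, hMl, hcard, hs⟩
    · have hlt : M.card < n / 2 := lt_of_le_of_ne (by omega) hcard
      have hcompl : 1 < (Finset.univ \ chanF M).card := by
        rw [Finset.card_sdiff_of_subset (Finset.subset_univ _), card_chanF hgen]
        simp only [Finset.card_univ, Fintype.card_fin]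
        omega
      obtain ⟨a, ha, b, hb, hab⟩ := Finset.one_lt_card.mp hcompl
      have hua : ¬ usedIn M a := by
        rw [Finset.mem_sdiff] at ha
        rw [← mem_chanF]; exact ha.2
      have hub : ¬ usedIn M b := by
        rw [Finset.mem_sdiff] at hb
        rw [← mem_chanF]; exact hb.2
      -- wlog a < b
      obtain ⟨i, j, hij, hui, huj⟩ : ∃ i j : Fin n, i < j ∧ ¬ usedIn M i ∧ ¬ usedIn M j := by
        rcases lt_or_gt_of_ne hab with hlt' | hlt'
        · exact ⟨a, b, hlt', hua, hub⟩
        · exact ⟨b, a, hlt', hub, hua⟩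
      have hnotmem : (i, j) ∉ M := by
        intro hmem; exact hui ⟨(i, j), hmem, Or.inl rfl⟩
      have hlayer := isLayer_insert hMl hij hui huj
      have hsort : IsSortingNet (insert (i, j) M :: C') := by
        constructor
        · intro Lx hLx
          rcases List.mem_cons.mp hLx with h' | h'
          · rw [h']; exact hlayer
          · exact hs.1 Lx (List.mem_cons_of_mem _ h')
        · intro x
          rw [run_cons, applyLayer_insert hMl hij hui huj]
          exact hs.2 (applyLayer {(i, j)} x)
      have hcard' : n / 2 - (insert (i, j) M).card ≤ k := by
        rw [Finset.card_insert_of_notMem hnotmem]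
        omega
      exact ih (insert (i, j) M) hcard' hsort

end Aux3
section Aux4

variable {n : ℕ}

/-- Standardized image of a (generalized) layer under a channel relabeling. -/
noncomputable def untLayer (σ : Equiv.Perm (Fin n)) (M : Layer n) : Layer n :=
  M.image fun c => if σ c.2 < σ c.1 then (σ c.2, σ c.1) else (σ c.1, σ c.2)

/-- The channel-swapping correction for flipped comparators. -/
noncomputable def flipFun (σ : Equiv.Perm (Fin n)) (M : Layer n) : Fin n → Fin n :=
  fun k =>
    if h1 : ∃ c ∈ M, σ c.2 < σ c.1 ∧ c.1 = k then h1.choose.2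
    else if h2 : ∃ c ∈ M, σ c.2 < σ c.1 ∧ c.2 = k then h2.choose.1
    else k

lemma flipFun_fst {σ : Equiv.Perm (Fin n)} {M : Layer n} (hM : IsGenLayer M)
    {a b : Fin n} (hab : (a, b) ∈ M) (hf : σ b < σ a) : flipFun σ M a = b := by
  have h1 : ∃ c ∈ M, σ c.2 < σ c.1 ∧ c.1 = a := ⟨(a, b), hab, hf, rfl⟩
  have he : h1.choose = (a, b) :=
    mem_eq_of_fst hM.2 hab h1.choose_spec.1 h1.choose_spec.2.2
  rw [flipFun, dif_pos h1, he]

lemma flipFun_snd {σ : Equiv.Perm (Fin n)} {M : Layer n} (hM : IsGenLayer M)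
    {a b : Fin n} (hab : (a, b) ∈ M) (hf : σ b < σ a) : flipFun σ M b = a := by
  have h1 : ¬ ∃ c ∈ M, σ c.2 < σ c.1 ∧ c.1 = b := by
    rintro ⟨c, hc, _, h⟩
    exact not_fst_eq_snd hM hab hc h
  have h2 : ∃ c ∈ M, σ c.2 < σ c.1 ∧ c.2 = b := ⟨(a, b), hab, hf, rfl⟩
  have he : h2.choose = (a, b) :=
    mem_eq_of_snd hM.2 hab h2.choose_spec.1 h2.choose_spec.2.2
  rw [flipFun, dif_neg h1, dif_pos h2, he]

lemma flipFun_other {σ : Equiv.Perm (Fin n)} {M : Layer n} {k : Fin n}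
    (hk : ∀ c ∈ M, σ c.2 < σ c.1 → c.1 ≠ k ∧ c.2 ≠ k) : flipFun σ M k = k := by
  have h1 : ¬ ∃ c ∈ M, σ c.2 < σ c.1 ∧ c.1 = k := by
    rintro ⟨c, hc, hf, h⟩; exact (hk c hc hf).1 h
  have h2 : ¬ ∃ c ∈ M, σ c.2 < σ c.1 ∧ c.2 = k := by
    rintro ⟨c, hc, hf, h⟩; exact (hk c hc hf).2 h
  rw [flipFun, dif_neg h1, dif_neg h2]

lemma flipFun_invol {σ : Equiv.Perm (Fin n)} {M : Layer n} (hM : IsGenLayer M) :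
    Function.Involutive (flipFun σ M) := by
  intro k
  by_cases h1 : ∃ c ∈ M, σ c.2 < σ c.1 ∧ c.1 = k
  · obtain ⟨c, hc, hf, hck⟩ := h1
    have hcm : (c.1, c.2) ∈ M := by simpa using hc
    subst hck
    rw [flipFun_fst hM hcm hf, flipFun_snd hM hcm hf]
  · by_cases h2 : ∃ c ∈ M, σ c.2 < σ c.1 ∧ c.2 = k
    · obtain ⟨c, hc, hf, hck⟩ := h2
      have hcm : (c.1, c.2) ∈ M := by simpa using hc
      subst hck
      rw [flipFun_snd hM hcm hf, flipFun_fst hM hcm hf]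
    · have hk : ∀ c ∈ M, σ c.2 < σ c.1 → c.1 ≠ k ∧ c.2 ≠ k := by
        intro c hc hf
        constructor <;> intro h
        · exact h1 ⟨c, hc, hf, h⟩
        · exact h2 ⟨c, hc, hf, h⟩
      rw [flipFun_other hk, flipFun_other hk]

lemma untLayer_isLayer {σ : Equiv.Perm (Fin n)} {M : Layer n} (hM : IsGenLayer M) :
    IsLayer (untLayer σ M) := by
  classical
  constructor
  · intro d hd
    obtain ⟨c, hc, rfl⟩ := Finset.mem_image.mp hd
    split_ifs with h
    · exact h
    · exact lt_of_le_of_ne (le_of_not_gt h) fun he => hM.1 c hc (σ.injective he)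
  · intro d hd d' hd' hne
    obtain ⟨c, hc, rfl⟩ := Finset.mem_image.mp hd
    obtain ⟨c', hc', rfl⟩ := Finset.mem_image.mp hd'
    have hcc : c ≠ c' := fun h => hne (by rw [h])
    obtain ⟨a1, a2, a3, a4⟩ := hM.2 c hc c' hc' hcc
    have e1 : σ c.1 ≠ σ c'.1 := fun h => a1 (σ.injective h)
    have e2 : σ c.1 ≠ σ c'.2 := fun h => a2 (σ.injective h)
    have e3 : σ c.2 ≠ σ c'.1 := fun h => a3 (σ.injective h)
    have e4 : σ c.2 ≠ σ c'.2 := fun h => a4 (σ.injective h)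
    split_ifs <;> exact ⟨by assumption, by assumption, by assumption, by assumption⟩

lemma untLayer_chan {σ : Equiv.Perm (Fin n)} {M : Layer n} {k : Fin n}
    (h : usedIn (untLayer σ M) k) : usedIn M (σ.symm k) := by
  classical
  obtain ⟨d, hd, hrole⟩ := h
  obtain ⟨c, hc, rfl⟩ := Finset.mem_image.mp hd
  refine ⟨c, hc, ?_⟩
  rcases hrole with h | h <;> split_ifs at h <;>
    [exact Or.inr (by rw [← h]; simp); exact Or.inl (by rw [← h]; simp);
     exact Or.inl (by rw [← h]; simp); exact Or.inr (by rw [← h]; simp)]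

lemma untLayer_comm {M : Layer n} (hM : IsGenLayer M) (σ : Equiv.Perm (Fin n)) :
    ∃ σ₂ : Equiv.Perm (Fin n),
      (∀ x : Fin n → Bool,
        applyLayer (untLayer σ M) (permVec σ x) = permVec σ₂ (applyLayer M x)) ∧
      ((∀ c ∈ M, ¬ σ c.2 < σ c.1) → σ₂ = σ) := by
  classical
  have hunt := untLayer_isLayer (σ := σ) hM
  have huntg := isGenLayer_of_isLayer hunt
  set ρ : Equiv.Perm (Fin n) := Function.Involutive.toPerm _ (flipFun_invol (σ := σ) hM)
    with hρ
  have hρ_apply : ∀ k, ρ k = flipFun σ M k := fun _ => rfl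
  have hρ_symm : ∀ k, ρ.symm k = flipFun σ M k := fun _ => rfl
  refine ⟨ρ.trans σ, ?_, ?_⟩
  · intro x
    funext k
    obtain ⟨m, rfl⟩ : ∃ m, k = σ m := ⟨σ.symm k, (σ.apply_symm_apply k).symm⟩
    have hsymm : (ρ.trans σ).symm (σ m) = flipFun σ M m := by
      simp [Equiv.symm_trans_apply, hρ_symm]
    rw [show permVec (ρ.trans σ) (applyLayer M x) (σ m)
          = applyLayer M x (flipFun σ M m) from by rw [permVec, hsymm]]
    by_cases hu : usedIn M m
    · obtain ⟨c, hc, hrole⟩ := hu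
      have hcm : (c.1, c.2) ∈ M := by simpa using hc
      rcases hrole with h | h
      · subst h
        by_cases hf : σ c.2 < σ c.1
        · have hdm : (σ c.2, σ c.1) ∈ untLayer σ M :=
            Finset.mem_image.mpr ⟨c, hc, by rw [if_pos hf]⟩
          rw [flipFun_fst hM hcm hf, applyLayer_snd huntg hdm, applyLayer_snd hM hcm]
          simp [permVec, Bool.or_comm]
        · have hdm : (σ c.1, σ c.2) ∈ untLayer σ M :=
            Finset.mem_image.mpr ⟨c, hc, by rw [if_neg hf]⟩
          have hff : flipFun σ M c.1 = c.1 := by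
            apply flipFun_other
            intro c' hc' hf'
            constructor <;> intro he
            · have : c' = (c.1, c.2) := mem_eq_of_fst hM.2 hcm hc' he
              rw [this] at hf'
              exact hf hf'
            · exact not_snd_eq_fst hM hcm hc' he
          rw [hff, applyLayer_fst huntg hdm, applyLayer_fst hM hcm]
          simp [permVec]
      · subst h
        by_cases hf : σ c.2 < σ c.1
        · have hdm : (σ c.2, σ c.1) ∈ untLayer σ M :=
            Finset.mem_image.mpr ⟨c, hc, by rw [if_pos hf]⟩
          rw [flipFun_snd hM hcm hf, applyLayer_fst huntg hdm, applyLayer_fst hM hcm]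
          simp [permVec, Bool.and_comm]
        · have hdm : (σ c.1, σ c.2) ∈ untLayer σ M :=
            Finset.mem_image.mpr ⟨c, hc, by rw [if_neg hf]⟩
          have hff : flipFun σ M c.2 = c.2 := by
            apply flipFun_other
            intro c' hc' hf'
            constructor <;> intro he
            · exact not_fst_eq_snd hM hcm hc' he
            · have : c' = (c.1, c.2) := mem_eq_of_snd hM.2 hcm hc' he
              rw [this] at hf'
              exact hf hf'
          rw [hff, applyLayer_snd huntg hdm, applyLayer_snd hM hcm]
          simp [permVec]
    · have hku : ¬ usedIn (untLayer σ M) (σ m) := by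
        intro hused
        have := untLayer_chan hused
        rw [Equiv.symm_apply_apply] at this
        exact hu this
      have hff : flipFun σ M m = m := by
        apply flipFun_other
        intro c hc _
        constructor <;> intro he
        · exact hu ⟨c, hc, Or.inl he⟩
        · exact hu ⟨c, hc, Or.inr he⟩
      rw [applyLayer_unused hku, hff, applyLayer_unused hu]
      simp [permVec]
  · intro hnf
    ext k
    simp only [Equiv.trans_apply]
    rw [hρ_apply, flipFun_other]
    intro c hc hf
    exact absurd hf (hnf c hc)

lemma untNet (G : Net n) (hG : IsGenNet G) (σ : Equiv.Perm (Fin n)) :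
    ∃ (D : Net n) (σ' : Equiv.Perm (Fin n)), IsNet D ∧ D.length = G.length ∧
      ∀ x : Fin n → Bool, run D (permVec σ x) = permVec σ' (run G x) := by
  induction G generalizing σ with
  | nil => exact ⟨[], σ, fun _ h => absurd h List.not_mem_nil, rfl, fun _ => rfl⟩
  | cons M G' ih =>
    have hMgen : IsGenLayer M := hG M (by simp)
    obtain ⟨σ₂, hcomm, _⟩ := untLayer_comm hMgen σ
    obtain ⟨D, σ', hDnet, hDlen, hrun⟩ := ih (fun L hL => hG L (by simp [hL])) σ₂
    refine ⟨untLayer σ M :: D, σ', ?_, by simp [hDlen], ?_⟩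
    · intro Lx hLx
      rcases List.mem_cons.mp hLx with h | h
      · rw [h]; exact untLayer_isLayer hMgen
      · exact hDnet Lx h
    · intro x
      rw [run_cons, hcomm, hrun, run_cons]

end Aux4
section Aux5

variable {n : ℕ}

/-- Channel relabeling induced by a bijection of comparators and a bijection of
unused channels. -/
noncomputable def chanMap (M N : Layer n) (g : {c // c ∈ M} ≃ {c // c ∈ N})
    (u : {k : Fin n // ¬ usedIn M k} ≃ {k : Fin n // ¬ usedIn N k}) : Fin n → Fin n :=
  fun k =>
    if h1 : ∃ c ∈ M, c.1 = k then (g ⟨h1.choose, h1.choose_spec.1⟩).val.1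
    else if h2 : ∃ c ∈ M, c.2 = k then (g ⟨h2.choose, h2.choose_spec.1⟩).val.2
    else (u ⟨k, fun hused => by
      rcases hused with ⟨c, hc, h | h⟩
      · exact h1 ⟨c, hc, h⟩
      · exact h2 ⟨c, hc, h⟩⟩).val

lemma chanMap_fst {M N : Layer n} (hM : NoOverlap M) {g : {c // c ∈ M} ≃ {c // c ∈ N}}
    {u : {k : Fin n // ¬ usedIn M k} ≃ {k : Fin n // ¬ usedIn N k}}
    {a b : Fin n} (hab : (a, b) ∈ M) : chanMap M N g u a = (g ⟨(a, b), hab⟩).val.1 := by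
  have h1 : ∃ c ∈ M, c.1 = a := ⟨(a, b), hab, rfl⟩
  have he : h1.choose = (a, b) := mem_eq_of_fst hM hab h1.choose_spec.1 h1.choose_spec.2
  rw [chanMap, dif_pos h1]
  have hs : (⟨h1.choose, h1.choose_spec.1⟩ : {c // c ∈ M}) = ⟨(a, b), hab⟩ := Subtype.ext he
  rw [hs]

lemma chanMap_snd {M N : Layer n} (hM : IsGenLayer M) {g : {c // c ∈ M} ≃ {c // c ∈ N}}
    {u : {k : Fin n // ¬ usedIn M k} ≃ {k : Fin n // ¬ usedIn N k}}
    {a b : Fin n} (hab : (a, b) ∈ M) : chanMap M N g u b = (g ⟨(a, b), hab⟩).val.2 := by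
  have h1 : ¬ ∃ c ∈ M, c.1 = b := by
    rintro ⟨c, hc, h⟩; exact not_fst_eq_snd hM hab hc h
  have h2 : ∃ c ∈ M, c.2 = b := ⟨(a, b), hab, rfl⟩
  have he : h2.choose = (a, b) := mem_eq_of_snd hM.2 hab h2.choose_spec.1 h2.choose_spec.2
  rw [chanMap, dif_neg h1, dif_pos h2]
  have hs : (⟨h2.choose, h2.choose_spec.1⟩ : {c // c ∈ M}) = ⟨(a, b), hab⟩ := Subtype.ext he
  rw [hs]

lemma chanMap_unused {M N : Layer n} {g : {c // c ∈ M} ≃ {c // c ∈ N}}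
    {u : {k : Fin n // ¬ usedIn M k} ≃ {k : Fin n // ¬ usedIn N k}}
    {k : Fin n} (hk : ¬ usedIn M k) : chanMap M N g u k = (u ⟨k, hk⟩).val := by
  have h1 : ¬ ∃ c ∈ M, c.1 = k := by
    rintro ⟨c, hc, h⟩; exact hk ⟨c, hc, Or.inl h⟩
  have h2 : ¬ ∃ c ∈ M, c.2 = k := by
    rintro ⟨c, hc, h⟩; exact hk ⟨c, hc, Or.inr h⟩
  rw [chanMap, dif_neg h1, dif_neg h2]

lemma chanMap_leftInv {M N : Layer n} (hM : IsGenLayer M) (hN : IsGenLayer N)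
    (g : {c // c ∈ M} ≃ {c // c ∈ N})
    (u : {k : Fin n // ¬ usedIn M k} ≃ {k : Fin n // ¬ usedIn N k}) (k : Fin n) :
    chanMap N M g.symm u.symm (chanMap M N g u k) = k := by
  by_cases hk : usedIn M k
  · obtain ⟨c, hc, hrole⟩ := hk
    have hcm : (c.1, c.2) ∈ M := by simpa using hc
    set d := g ⟨(c.1, c.2), hcm⟩ with hd
    have hdm : (d.val.1, d.val.2) ∈ N := by
      rw [show (d.val.1, d.val.2) = d.val from rfl]
      exact d.prop
    have hback : (⟨(d.val.1, d.val.2), hdm⟩ : {c // c ∈ N}) = d := Subtype.ext rfl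
    rcases hrole with h | h
    · subst h
      rw [chanMap_fst hM.2 hcm, ← hd, chanMap_fst hN.2 hdm, hback, Equiv.symm_apply_apply]
    · subst h
      rw [chanMap_snd hM hcm, ← hd, chanMap_snd hN hdm, hback, Equiv.symm_apply_apply]
  · rw [chanMap_unused hk]
    set w := u ⟨k, hk⟩ with hw
    have hwk : ¬ usedIn N w.val := w.prop
    rw [chanMap_unused hwk]
    have : (⟨w.val, hwk⟩ : {k : Fin n // ¬ usedIn N k}) = w := Subtype.ext rfl
    rw [this, hw, Equiv.symm_apply_apply]

lemma card_unused {M : Layer n} (hM : IsGenLayer M) :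
    Fintype.card {k : Fin n // ¬ usedIn M k} = n - 2 * M.card := by
  classical
  rw [Fintype.card_subtype]
  have he : Finset.univ.filter (fun k : Fin n => ¬ usedIn M k) = Finset.univ \ chanF M := by
    ext k
    simp [mem_chanF]
  rw [he, Finset.card_sdiff_of_subset (Finset.subset_univ _), card_chanF hM]
  simp

lemma exists_perm {M N : Layer n} (hM : IsLayer M) (hN : IsLayer N)
    (hMc : M.card = n / 2) (hNc : N.card = n / 2) :
    ∃ π : Equiv.Perm (Fin n), ∀ c ∈ M, (π c.1, π c.2) ∈ N := by
  classical
  have hMg := isGenLayer_of_isLayer hM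
  have hNg := isGenLayer_of_isLayer hN
  have hgcard : Fintype.card {c // c ∈ M} = Fintype.card {c // c ∈ N} := by
    rw [Fintype.card_coe, Fintype.card_coe, hMc, hNc]
  have hucard : Fintype.card {k : Fin n // ¬ usedIn M k}
      = Fintype.card {k : Fin n // ¬ usedIn N k} := by
    rw [card_unused hMg, card_unused hNg, hMc, hNc]
  let g : {c // c ∈ M} ≃ {c // c ∈ N} := Fintype.equivOfCardEq hgcard
  let u : {k : Fin n // ¬ usedIn M k} ≃ {k : Fin n // ¬ usedIn N k} :=
    Fintype.equivOfCardEq hucard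
  let π : Equiv.Perm (Fin n) :=
    ⟨chanMap M N g u, chanMap N M g.symm u.symm,
      chanMap_leftInv hMg hNg g u,
      fun k => by
        have := chanMap_leftInv hNg hMg g.symm u.symm k
        simpa using this⟩
  refine ⟨π, ?_⟩
  intro c hc
  have hcm : (c.1, c.2) ∈ M := by simpa using hc
  have h1 : π c.1 = (g ⟨(c.1, c.2), hcm⟩).val.1 := chanMap_fst hM.2 hcm
  have h2 : π c.2 = (g ⟨(c.1, c.2), hcm⟩).val.2 := chanMap_snd hMg hcm
  rw [h1, h2]
  rw [show ((g ⟨(c.1, c.2), hcm⟩).val.1, (g ⟨(c.1, c.2), hcm⟩).val.2)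
      = (g ⟨(c.1, c.2), hcm⟩).val from rfl]
  exact (g ⟨(c.1, c.2), hcm⟩).prop

end Aux5
/-- if `L` is a maximal layer on n channels and there is a sorting
network of depth d ≥ 1, then there is one of depth d whose first layer is `L`. -/
theorem first_layer_can_be_fixed {n d : ℕ} (L : Layer n)
    (hL : IsLayer L) (hmax : L.card = n / 2) (hd : 1 ≤ d)
    (h : ∃ C : Net n, C.length = d ∧ IsSortingNet C) :
    ∃ rest : Net n, (L :: rest).length = d ∧ IsSortingNet (L :: rest) := by
  classical
  obtain ⟨C, hlen, hC⟩ := h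
  cases C with
  | nil => simp at hlen; omega
  | cons M C'' =>
    obtain ⟨M', hM'layer, hM'card, hsort⟩ := extend_sorting hC
    have hM'g := isGenLayer_of_isLayer hM'layer
    obtain ⟨π, hπ⟩ := exists_perm hM'layer hL hM'card hmax
    have hnoflip : ∀ c ∈ M', ¬ π c.2 < π c.1 := fun c hc =>
      lt_asymm (hL.1 _ (hπ c hc))
    have huL : untLayer π M' = L := by
      apply Finset.eq_of_subset_of_card_le
      · intro p hp
        obtain ⟨c, hc, rfl⟩ := Finset.mem_image.mp hp
        rw [if_neg (hnoflip c hc)]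
        exact hπ c hc
      · have hcard : (untLayer π M').card = M'.card := by
          apply Finset.card_image_of_injOn
          intro c hc c' hc' hcc
          simp only [Finset.mem_coe] at hc hc'
          simp only at hcc
          rw [if_neg (hnoflip c hc), if_neg (hnoflip c' hc')] at hcc
          have h1 := congrArg Prod.fst hcc
          have h2 := congrArg Prod.snd hcc
          simp only [] at h1 h2
          exact Prod.ext (π.injective h1) (π.injective h2)
        rw [hcard, hM'card, hmax]
    obtain ⟨σ₂, hcomm, hid⟩ := untLayer_comm hM'g π
    rw [hid hnoflip] at hcomm
    have hCnet : IsNet C'' := fun Lx hLx => hsort.1 Lx (by simp [hLx])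
    obtain ⟨D, σ', hDnet, hDlen, hrun⟩ :=
      untNet C'' (fun Lx hLx => isGenLayer_of_isLayer (hCnet Lx hLx)) π
    have hlenD : (L :: D).length = d := by
      simp only [List.length_cons] at hlen ⊢
      omega
    have hnet : IsNet (L :: D) := by
      intro Lx hLx
      rcases List.mem_cons.mp hLx with h' | h'
      · rw [h']; exact hL
      · exact hDnet Lx h'
    have key : ∀ y : Fin n → Bool,
        run (L :: D) y = permVec σ' (run (M' :: C'') (permVec π.symm y)) := by
      intro y
      rw [run_cons, ← permVec_permVec_symm π y, ← huL, hcomm, hrun, ← run_cons,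
        permVec_symm_permVec]
    refine ⟨D, hlenD, hnet, ?_⟩
    intro y
    have hs : BSorted (run (M' :: C'') (permVec π.symm y)) := hsort.2 _
    set s := run (M' :: C'') (permVec π.symm y) with hsdef
    rw [key y]
    suffices hfix : permVec σ' s = s by rw [hfix]; exact hs
    have h1 : run (L :: D) s = s := run_bsorted hnet hs
    have h2 := key s
    set t := run (M' :: C'') (permVec π.symm s) with htdef
    have ht : BSorted t := hsort.2 _
    have hst : s = permVec σ' t := by rw [← h2, h1]
    have hseqt : s = t := bsorted_eq_of_ones hs ht (by rw [hst, ones_permVec])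
    conv_lhs => rw [hseqt]
    exact hst.symm

end SN
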